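/- Let R be a local ring with maximal ideal m generated by a family (a_λ)_{λ∈Λ} and residue field k = R/m. Let S = ⋃_i R[a_λ^{1/d^i}] be the ring obtained by adjoining compatible d^i-th roots of all generators, and let m' be the ideal of S generated by {a_λ^{1/d^i}}. Then S is a local ring with maximal ideal m' and residue field S/m' ≅ k. -/

import Mathlib

open MvPolynomial

/-- The relations defining `S = ⋃_i R[a_λ^{1/d^i}]`: generators `x_{λ,0} = a_λ` and
`x_{λ,i+1}^d = x_{λ,i}`. -/
noncomputable def ekaFamRelations (R : Type*) [CommRing R] {Λ : Type*} (a : Λ → R) (d : ℕ) :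
    Ideal (MvPolynomial (Λ × ℕ) R) :=
  Ideal.span
    (Set.range (fun lam : Λ => (X (lam, 0) : MvPolynomial (Λ × ℕ) R) - C (a lam)) ∪
      Set.range (fun li : Λ × ℕ =>
        (X (li.1, li.2 + 1) : MvPolynomial (Λ × ℕ) R) ^ d - X li))

/-- The ring `S = ⋃_i R[a_λ^{1/d^i}]` obtained by adjoining compatible `d^i`-th roots of a
family of elements `a_λ`, presented as a quotient of a polynomial ring. -/
def EkaFamRing (R : Type*) [CommRing R] {Λ : Type*} (a : Λ → R) (d : ℕ) : Type _ :=
  MvPolynomial (Λ × ℕ) R ⧸ ekaFamRelations R a d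

noncomputable instance (R : Type*) [CommRing R] {Λ : Type*} (a : Λ → R) (d : ℕ) :
    CommRing (EkaFamRing R a d) :=
  Ideal.Quotient.commRing _

/-- The image of the root `a_λ^{1/d^i}` in `EkaFamRing R a d`. -/
noncomputable def ekaFamRoot (R : Type*) [CommRing R] {Λ : Type*} (a : Λ → R) (d : ℕ)
    (li : Λ × ℕ) : EkaFamRing R a d :=
  Ideal.Quotient.mk (ekaFamRelations R a d) (X li)

section EkaAux

variable {R : Type*} [CommRing R] {Λ : Type*} (a : Λ → R) (d : ℕ)

noncomputable instance ekaAlgebra : Algebra R (EkaFamRing R a d) :=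
  Ideal.Quotient.algebra R

lemma eka_algebraMap_eq (r : R) :
    algebraMap R (EkaFamRing R a d) r = Ideal.Quotient.mk (ekaFamRelations R a d) (C r) := by
  rw [← MvPolynomial.algebraMap_eq, Ideal.Quotient.mk_algebraMap]
  rfl

lemma ekaFamRoot_zero (lam : Λ) :
    ekaFamRoot R a d (lam, 0) = algebraMap R (EkaFamRing R a d) (a lam) := by
  show Ideal.Quotient.mk (ekaFamRelations R a d) (X (lam, 0)) =
    Ideal.Quotient.mk (ekaFamRelations R a d) (C (a lam))
  rw [Ideal.Quotient.eq]
  exact Ideal.subset_span (Or.inl ⟨lam, rfl⟩)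

lemma ekaFamRoot_succ (li : Λ × ℕ) :
    ekaFamRoot R a d (li.1, li.2 + 1) ^ d = ekaFamRoot R a d li := by
  show Ideal.Quotient.mk (ekaFamRelations R a d) (X (li.1, li.2 + 1) ^ d) =
    Ideal.Quotient.mk (ekaFamRelations R a d) (X li)
  rw [Ideal.Quotient.eq]
  exact Ideal.subset_span (Or.inr ⟨li, rfl⟩)

lemma ekaFamRoot_pow (lam : Λ) (i : ℕ) :
    ekaFamRoot R a d (lam, i) ^ d ^ i = algebraMap R (EkaFamRing R a d) (a lam) := by
  induction i with
  | zero => simpa using ekaFamRoot_zero a d lam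
  | succ i ih =>
      rw [pow_succ', pow_mul, ekaFamRoot_succ a d (lam, i), ih]

lemma ekaFamRoot_isIntegral (hd0 : d ≠ 0) (li : Λ × ℕ) :
    IsIntegral R (ekaFamRoot R a d li) := by
  refine ⟨Polynomial.X ^ d ^ li.2 - Polynomial.C (a li.1),
    Polynomial.monic_X_pow_sub_C _ (pow_ne_zero _ hd0), ?_⟩
  have := ekaFamRoot_pow a d li.1 li.2
  simp only [Polynomial.eval₂_sub, Polynomial.eval₂_X_pow, Polynomial.eval₂_C]
  rw [← Prod.mk.eta (p := li)] at this ⊢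
  rw [this, sub_self]

lemma eka_isIntegral (hd0 : d ≠ 0) : Algebra.IsIntegral R (EkaFamRing R a d) := by
  constructor
  intro x
  obtain ⟨p, rfl⟩ := Ideal.Quotient.mk_surjective x
  induction p using MvPolynomial.induction_on with
  | C r => exact isIntegral_algebraMap
  | add p q hp hq => rw [map_add]; exact hp.add hq
  | mul_X p li hp => rw [map_mul]; exact hp.mul (ekaFamRoot_isIntegral a d hd0 li)

lemma eka_sub_constantCoeff_mem (p : MvPolynomial (Λ × ℕ) R) :
    p - C (constantCoeff p) ∈
      Ideal.span (Set.range (X : Λ × ℕ → MvPolynomial (Λ × ℕ) R)) := by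
  induction p using MvPolynomial.induction_on with
  | C r => simp
  | add p q hp hq =>
      have : p + q - C (constantCoeff (p + q)) =
          (p - C (constantCoeff p)) + (q - C (constantCoeff q)) := by
        rw [map_add, map_add]; ring
      rw [this]
      exact Ideal.add_mem _ hp hq
  | mul_X p li hp =>
      have : p * X li - C (constantCoeff (p * X li)) = p * X li := by simp
      rw [this]
      exact Ideal.mul_mem_left _ p (Ideal.subset_span ⟨li, rfl⟩)

end EkaAux

/-- Eka local rings: if `R` is local with maximal ideal `m` generated by `(a_λ)` and residue
field `k = R/m`, then `S = ⋃_i R[a_λ^{1/d^i}]` is local with maximal ideal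
`m' = (a_λ^{1/d^i})` and residue field `S/m' ≅ k`. -/
theorem ekaFamRing_isLocalRing
    (R : Type*) [CommRing R] [IsLocalRing R] {Λ : Type*} (a : Λ → R)
    (ha : Ideal.span (Set.range a) = IsLocalRing.maximalIdeal R)
    (d : ℕ) (hd : 2 ≤ d) :
    IsLocalRing (EkaFamRing R a d) ∧
      (Ideal.span (Set.range (ekaFamRoot R a d))).IsMaximal ∧
      (∀ J : Ideal (EkaFamRing R a d), J.IsMaximal →
        J = Ideal.span (Set.range (ekaFamRoot R a d))) ∧
      Nonempty
        ((EkaFamRing R a d ⧸ Ideal.span (Set.range (ekaFamRoot R a d))) ≃+*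
          IsLocalRing.ResidueField R) := by
  have hd0 : d ≠ 0 := by omega
  set I := ekaFamRelations R a d with hI
  set m' := Ideal.span (Set.range (ekaFamRoot R a d)) with hm'
  -- the residue map on the polynomial ring, sending all variables to `0`
  set φ : MvPolynomial (Λ × ℕ) R →+* IsLocalRing.ResidueField R :=
    eval₂Hom (IsLocalRing.residue R) (fun _ => 0) with hφ
  have hφI : I ≤ RingHom.ker φ := by
    rw [hI, ekaFamRelations, Ideal.span_le]
    rintro f (⟨lam, rfl⟩ | ⟨li, rfl⟩)
    · have : a lam ∈ IsLocalRing.maximalIdeal R := by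
        rw [← ha]; exact Ideal.subset_span ⟨lam, rfl⟩
      simp [hφ, RingHom.mem_ker, IsLocalRing.residue_eq_zero_iff, this]
    · simp [hφ, RingHom.mem_ker, zero_pow hd0]
  set ψ : EkaFamRing R a d →+* IsLocalRing.ResidueField R :=
    Ideal.Quotient.lift I φ (fun x hx => hφI hx) with hψ
  have hψmk : ∀ p, ψ (Ideal.Quotient.mk I p) = φ p := fun p => Ideal.Quotient.lift_mk I _ _
  have hψsurj : Function.Surjective ψ := by
    intro y
    obtain ⟨r, rfl⟩ := Ideal.Quotient.mk_surjective y
    refine ⟨Ideal.Quotient.mk I (C r), ?_⟩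
    rw [hψmk, hφ]
    simp only [eval₂Hom_C]
    rfl
  have hmem_m' : ∀ lam : Λ, Ideal.Quotient.mk I (C (a lam)) ∈ m' := by
    intro lam
    have h1 : Ideal.Quotient.mk I (C (a lam)) = ekaFamRoot R a d (lam, 0) := by
      rw [ekaFamRoot_zero, eka_algebraMap_eq]
    rw [h1]
    exact Ideal.subset_span ⟨(lam, 0), rfl⟩
  have hker : RingHom.ker ψ = m' := by
    apply le_antisymm
    · intro x hx
      obtain ⟨p, rfl⟩ := Ideal.Quotient.mk_surjective x
      replace hx : ψ (Ideal.Quotient.mk I p) = 0 := hx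
      rw [hψmk, hφ, eval₂Hom_zero'_apply,
        IsLocalRing.residue_eq_zero_iff] at hx
      have h1 : Ideal.Quotient.mk I (C (constantCoeff p)) ∈ m' := by
        have hmem : constantCoeff p ∈ Ideal.span (Set.range a) := by rwa [ha]
        have h2 := Ideal.mem_map_of_mem ((Ideal.Quotient.mk I).comp (C : R →+* _)) hmem
        rw [Ideal.map_span] at h2
        refine Ideal.span_le.mpr ?_ h2
        rintro _ ⟨_, ⟨lam, rfl⟩, rfl⟩
        exact hmem_m' lam
      have h2 : Ideal.Quotient.mk I (p - C (constantCoeff p)) ∈ m' := by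
        have h3 := Ideal.mem_map_of_mem (Ideal.Quotient.mk I)
          (eka_sub_constantCoeff_mem p)
        rw [Ideal.map_span] at h3
        refine Ideal.span_le.mpr ?_ h3
        rintro _ ⟨_, ⟨li, rfl⟩, rfl⟩
        exact Ideal.subset_span ⟨li, rfl⟩
      have h4 : Ideal.Quotient.mk I p =
          Ideal.Quotient.mk I (C (constantCoeff p)) +
            Ideal.Quotient.mk I (p - C (constantCoeff p)) := by
        rw [← map_add]; ring_nf
      rw [h4]
      exact Ideal.add_mem _ h1 h2
    · rw [hm', Ideal.span_le]
      rintro _ ⟨li, rfl⟩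
      have : ψ (ekaFamRoot R a d li) = 0 := by
        show ψ (Ideal.Quotient.mk I (X li)) = 0
        rw [hψmk, hφ]
        simp
      exact this
  have e : (EkaFamRing R a d ⧸ m') ≃+* IsLocalRing.ResidueField R :=
    hker ▸ RingHom.quotientKerEquivOfSurjective hψsurj
  have hm'max : m'.IsMaximal :=
    Ideal.Quotient.maximal_of_isField _
      (MulEquiv.isField (Field.toIsField _) e.toMulEquiv)
  haveI := eka_isIntegral a d hd0
  have huniq : ∀ J : Ideal (EkaFamRing R a d), J.IsMaximal → J = m' := by
    intro J hJ
    haveI := hJ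
    have hcom : (J.comap (algebraMap R (EkaFamRing R a d))).IsMaximal :=
      Ideal.isMaximal_comap_of_isIntegral_of_isMaximal J
    have hcom' : J.comap (algebraMap R (EkaFamRing R a d)) = IsLocalRing.maximalIdeal R :=
      IsLocalRing.eq_maximalIdeal hcom
    have hroots : m' ≤ J := by
      rw [hm', Ideal.span_le]
      rintro _ ⟨⟨lam, i⟩, rfl⟩
      have hma : algebraMap R (EkaFamRing R a d) (a lam) ∈ J := by
        have h5 : a lam ∈ J.comap (algebraMap R (EkaFamRing R a d)) := by
          rw [hcom', ← ha]; exact Ideal.subset_span ⟨lam, rfl⟩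
        exact h5
      exact hJ.isPrime.mem_of_pow_mem (d ^ i)
        (by rw [ekaFamRoot_pow a d lam i]; exact hma)
    exact (hm'max.eq_of_le hJ.ne_top hroots).symm
  exact ⟨IsLocalRing.of_unique_max_ideal ⟨m', hm'max, huniq⟩, hm'max, huniq, ⟨e⟩⟩
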